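/- Let G be a signed graph, S ⊆ V(G), and C ⊆ V(G)∖S a vertex set inducing a clique in G all of whose edges are negative. Let X ⊆ C be such that |X| > (|C| + |N_G(X) ∩ S|)/2, every neighbor in G of every vertex of X lies in C ∪ S, and all vertices x ∈ X have the same set of positive neighbors in S (equal to N_G^+(X) ∩ S) and the same set of negative neighbors in S (equal to N_G^−(X) ∩ S). Then for any distinct x1, x2 ∈ X there exists a partition (V1,V2) of V(G) whose induced balanced subgraph has β(G) edges and such that x1 ∈ V1 and x2 ∈ V2. -/

import Mathlib

/-- Sign convention: `true` = positive edge, `false` = negative edge.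
An edge `e` is *consistent* with the partition `(A, Aᶜ)` of the vertex set if it is
positive when both endpoints lie on the same side and negative otherwise. -/
def SignConsistent {V : Type*} (sign : Sym2 V → Bool) (A : Set V) (e : Sym2 V) : Prop :=
  ∀ u v : V, e = s(u, v) → (sign e = true ↔ (u ∈ A ↔ v ∈ A))

/-- The number of edges of the balanced subgraph induced by the partition `(A, Aᶜ)`. -/
noncomputable def balCount {V : Type*} (G : SimpleGraph V) (sign : Sym2 V → Bool)
    (A : Set V) : ℕ :=
  {e | e ∈ G.edgeSet ∧ SignConsistent sign A e}.ncard

/-- `beta G sign` = β(G): the maximum number of edges of a balanced subgraph of the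
signed graph `(G, sign)`. -/
noncomputable def beta {V : Type*} (G : SimpleGraph V) (sign : Sym2 V → Bool) : ℕ :=
  sSup {n | ∃ A : Set V, n = balCount G sign A}

/-- The Poljak–Turzík bound `pt G = m/2 + (n − t)/4`, where `m` is the number of edges,
`n` the number of vertices and `t` the number of connected components. -/
noncomputable def pt {V : Type*} (G : SimpleGraph V) : ℚ :=
  (G.edgeSet.ncard : ℚ) / 2 +
    ((Nat.card V : ℚ) - (Nat.card G.ConnectedComponent : ℚ)) / 4

/-- β of the signed subgraph induced on the vertex set `U`. -/
noncomputable def betaOn {V : Type*} (G : SimpleGraph V) (sign : Sym2 V → Bool)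
    (U : Set V) : ℕ :=
  beta (G.induce U) (fun e => sign (Sym2.map Subtype.val e))

/-- `pt` of the subgraph induced on the vertex set `U`. -/
noncomputable def ptOn {V : Type*} (G : SimpleGraph V) (U : Set V) : ℚ :=
  pt (G.induce U)

/-- The signed graph `(G, sign)` is balanced: some partition `(A, Aᶜ)` is consistent
with every edge. -/
def IsBalanced {V : Type*} (G : SimpleGraph V) (sign : Sym2 V → Bool) : Prop :=
  ∃ A : Set V, ∀ u v : V, G.Adj u v → (sign s(u, v) = true ↔ (u ∈ A ↔ v ∈ A))

/-- `a`, `b`, `c` form a positive triangle: all three edges exist and the number of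
negative edges among them is even. -/
def PositiveTriangle {V : Type*} (G : SimpleGraph V) (sign : Sym2 V → Bool)
    (a b c : V) : Prop :=
  G.Adj a b ∧ G.Adj b c ∧ G.Adj c a ∧
    Even ((if sign s(a, b) then 0 else 1) + (if sign s(b, c) then 0 else 1) +
      (if sign s(c, a) then 0 else 1))

/-- `X` is (the vertex set of) a connected component of `G − S`. -/
def IsCompOf {V : Type*} (G : SimpleGraph V) (S X : Set V) : Prop :=
  Disjoint X S ∧ (G.induce X).Connected ∧
    ∀ x ∈ X, ∀ y : V, G.Adj x y → y ∉ S → y ∈ X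

/-- The neighborhood of a vertex set `X`. -/
def nbhd {V : Type*} (G : SimpleGraph V) (X : Set V) : Set V :=
  {v | v ∉ X ∧ ∃ x ∈ X, G.Adj x v}


lemma signConsistent_iff {V : Type*} (sign : Sym2 V → Bool) (A : Set V) (u v : V) :
    SignConsistent sign A s(u, v) ↔ (sign s(u, v) = true ↔ (u ∈ A ↔ v ∈ A)) := by
  constructor
  · intro h; exact h u v rfl
  · intro h a b hab
    rw [Sym2.eq_iff] at hab
    rcases hab with ⟨rfl, rfl⟩ | ⟨rfl, rfl⟩
    · exact h
    · exact h.trans Iff.comm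

lemma bdd_balCount {V : Type*} [Fintype V] (G : SimpleGraph V) (sign : Sym2 V → Bool) :
    ∀ n ∈ {n | ∃ A : Set V, n = balCount G sign A}, n ≤ G.edgeSet.ncard := by
  rintro n ⟨B, rfl⟩
  exact Set.ncard_le_ncard (fun e he => he.1) (Set.toFinite _)

lemma balCount_le_beta {V : Type*} [Fintype V] (G : SimpleGraph V) (sign : Sym2 V → Bool)
    (A : Set V) : balCount G sign A ≤ beta G sign :=
  le_csSup ⟨G.edgeSet.ncard, bdd_balCount G sign⟩ ⟨A, rfl⟩

lemma exists_opt {V : Type*} [Fintype V] (G : SimpleGraph V) (sign : Sym2 V → Bool) :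
    ∃ A : Set V, balCount G sign A = beta G sign := by
  have h := Nat.sSup_mem (s := {n | ∃ A : Set V, n = balCount G sign A})
    ⟨balCount G sign ∅, ⟨∅, rfl⟩⟩ ⟨G.edgeSet.ncard, bdd_balCount G sign⟩
  obtain ⟨A, hA⟩ := h
  exact ⟨A, hA.symm⟩

lemma balCount_compl {V : Type*} (G : SimpleGraph V) (sign : Sym2 V → Bool) (A : Set V) :
    balCount G sign Aᶜ = balCount G sign A := by
  unfold balCount
  congr 1
  ext e
  induction e using Sym2.ind with
  | _ u v =>
    simp only [Set.mem_setOf_eq]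
    refine and_congr_right fun _ => ?_
    rw [signConsistent_iff, signConsistent_iff, Set.mem_compl_iff, Set.mem_compl_iff,
      not_iff_not]

lemma balCount_perm {V : Type*} (G : SimpleGraph V) (sign : Sym2 V → Bool) (σ : Equiv.Perm V)
    (hinv : ∀ v, σ (σ v) = v)
    (h : ∀ u v, G.Adj u v → G.Adj (σ u) (σ v) ∧ sign s(σ u, σ v) = sign s(u, v))
    (A : Set V) : balCount G sign (σ ⁻¹' A) = balCount G sign A := by
  have hmapinv : ∀ e : Sym2 V, Sym2.map σ (Sym2.map σ e) = e := by
    intro e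
    induction e using Sym2.ind with
    | _ u v => simp [Sym2.map_pair_eq, hinv]
  have hinj : Function.Injective (Sym2.map (σ : V → V)) :=
    Function.Involutive.injective hmapinv
  have himg : {e | e ∈ G.edgeSet ∧ SignConsistent sign (σ ⁻¹' A) e}
      = Sym2.map σ '' {e | e ∈ G.edgeSet ∧ SignConsistent sign A e} := by
    ext e
    induction e using Sym2.ind with
    | _ u v =>
      simp only [Set.mem_setOf_eq, Set.mem_image, SimpleGraph.mem_edgeSet]
      constructor
      · rintro ⟨he, hsc⟩
        obtain ⟨hadj', hsgn'⟩ := h u v he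
        refine ⟨s(σ u, σ v), ⟨hadj', ?_⟩, by simp [Sym2.map_pair_eq, hinv]⟩
        rw [signConsistent_iff] at hsc ⊢
        rw [hsgn', hsc]
        simp [Set.mem_preimage]
      · rintro ⟨e', ⟨he', hsc'⟩, heq⟩
        have he'' : e' = s(σ u, σ v) := by
          have := congrArg (Sym2.map σ) heq
          rw [hmapinv] at this
          rw [this, Sym2.map_pair_eq]
        subst he''
        rw [SimpleGraph.mem_edgeSet] at he'
        obtain ⟨hadj2, hsgn2⟩ := h (σ u) (σ v) he'
        rw [hinv, hinv] at hadj2 hsgn2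
        refine ⟨hadj2, ?_⟩
        rw [signConsistent_iff] at hsc' ⊢
        rw [hsgn2, hsc']
        simp [Set.mem_preimage]
  rw [balCount, balCount, himg, Set.ncard_image_of_injective _ hinj]

lemma sc_not_mem {V : Type*} (sign : Sym2 V → Bool) (A : Set V) (x : V) (e : Sym2 V)
    (hx : x ∉ e) : SignConsistent sign (A \ {x}) e ↔ SignConsistent sign A e := by
  induction e using Sym2.ind with
  | _ u v =>
    rw [Sym2.mem_iff] at hx
    push_neg at hx
    rw [signConsistent_iff, signConsistent_iff]
    simp [Set.mem_diff, hx.1.symm, hx.2.symm]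

lemma flip_le {V : Type*} [Fintype V] (G : SimpleGraph V) (sign : Sym2 V → Bool)
    (A : Set V) (x₂ : V) (hx₂ : x₂ ∈ A)
    (hW : {v | G.Adj x₂ v ∧ (sign s(x₂, v) = true ↔ v ∈ A)}.ncard
        ≤ {v | G.Adj x₂ v ∧ (sign s(x₂, v) = true ↔ v ∉ A)}.ncard) :
    balCount G sign A ≤ balCount G sign (A \ {x₂}) := by
  classical
  set W : Set V := {v | G.Adj x₂ v ∧ (sign s(x₂, v) = true ↔ v ∈ A)} with hWdef
  set W' : Set V := {v | G.Adj x₂ v ∧ (sign s(x₂, v) = true ↔ v ∉ A)} with hW'def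
  set N : Set (Sym2 V) := {e | e ∈ G.edgeSet ∧ SignConsistent sign A e ∧ x₂ ∉ e} with hNdef
  have hx₂A' : x₂ ∉ A \ {x₂} := by simp
  have hEA : {e | e ∈ G.edgeSet ∧ SignConsistent sign A e}
      = N ∪ (fun v => s(x₂, v)) '' W := by
    ext e
    simp only [Set.mem_setOf_eq, Set.mem_union, Set.mem_image, hNdef, hWdef]
    constructor
    · rintro ⟨he, hsc⟩
      by_cases hxe : x₂ ∈ e
      · right
        obtain ⟨w, rfl⟩ := Sym2.mem_iff_exists.mp hxe
        rw [SimpleGraph.mem_edgeSet] at he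
        rw [signConsistent_iff] at hsc
        exact ⟨w, ⟨he, by rw [hsc]; simp [hx₂]⟩, rfl⟩
      · exact Or.inl ⟨he, hsc, hxe⟩
    · rintro (⟨he, hsc, _⟩ | ⟨w, ⟨hadj, hiff⟩, rfl⟩)
      · exact ⟨he, hsc⟩
      · refine ⟨G.mem_edgeSet.mpr hadj, ?_⟩
        rw [signConsistent_iff, hiff]
        simp [hx₂]
  have hEA' : {e | e ∈ G.edgeSet ∧ SignConsistent sign (A \ {x₂}) e}
      = N ∪ (fun v => s(x₂, v)) '' W' := by
    ext e
    simp only [Set.mem_setOf_eq, Set.mem_union, Set.mem_image, hNdef, hW'def]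
    constructor
    · rintro ⟨he, hsc⟩
      by_cases hxe : x₂ ∈ e
      · right
        obtain ⟨w, rfl⟩ := Sym2.mem_iff_exists.mp hxe
        rw [SimpleGraph.mem_edgeSet] at he
        rw [signConsistent_iff] at hsc
        have hw : w ≠ x₂ := fun h => G.irrefl (h ▸ he)
        refine ⟨w, ⟨he, ?_⟩, rfl⟩
        rw [hsc]
        simp [hx₂A', Set.mem_diff, hw]
      · exact Or.inl ⟨he, (sc_not_mem sign A x₂ e hxe).mp hsc, hxe⟩
    · rintro (⟨he, hsc, hxe⟩ | ⟨w, ⟨hadj, hiff⟩, rfl⟩)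
      · exact ⟨he, (sc_not_mem sign A x₂ e hxe).mpr hsc⟩
      · refine ⟨G.mem_edgeSet.mpr hadj, ?_⟩
        have hw : w ≠ x₂ := fun h => G.irrefl (h ▸ hadj)
        rw [signConsistent_iff, hiff]
        simp [hx₂A', Set.mem_diff, hw]
  have hinjW : ∀ T : Set V, (∀ v ∈ T, G.Adj x₂ v) → Set.InjOn (fun v => s(x₂, v)) T := by
    intro T hT v hv w hw hvw
    simp only [Sym2.eq_iff] at hvw
    rcases hvw with ⟨-, h⟩ | ⟨h1, h2⟩
    · exact h
    · exact h2.trans h1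
  have hdisj : ∀ T : Set V, Disjoint N ((fun v => s(x₂, v)) '' T) := by
    intro T
    rw [Set.disjoint_left]
    rintro e ⟨-, -, hxe⟩ ⟨w, -, rfl⟩
    exact hxe (Sym2.mem_mk_left x₂ w)
  rw [balCount, balCount, hEA, hEA',
    Set.ncard_union_eq (hdisj W) (Set.toFinite _) (Set.toFinite _),
    Set.ncard_union_eq (hdisj W') (Set.toFinite _) (Set.toFinite _),
    Set.ncard_image_of_injOn (hinjW W fun v hv => hv.1),
    Set.ncard_image_of_injOn (hinjW W' fun v hv => hv.1)]
  exact Nat.add_le_add_left hW _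

/-- Let `S ⊆ V(G)` and let `C ⊆ V(G) ∖ S` induce a clique all of
whose edges are negative. Let `X ⊆ C` satisfy `|X| > (|C| + |N_G(X) ∩ S|)/2`, all
neighbors of `X` lie in `C ∪ S`, and all vertices of `X` have the same positive
neighbors in `S` and the same negative neighbors in `S`. Then for any distinct
`x₁, x₂ ∈ X` some partition `(V₁, V₂) = (A, Aᶜ)` induces a balanced subgraph with
`β(G)` edges, with `x₁ ∈ V₁` and `x₂ ∈ V₂`. -/
theorem stmt16 {V : Type*} [Fintype V] (G : SimpleGraph V) (sign : Sym2 V → Bool)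
    (S C X : Set V) (hCS : Disjoint C S) (hclique : G.IsClique C)
    (hneg : ∀ u ∈ C, ∀ v ∈ C, u ≠ v → sign s(u, v) = false)
    (hXC : X ⊆ C)
    (hXsize : ((C.ncard : ℚ) + ((nbhd G X ∩ S).ncard : ℚ)) / 2 < (X.ncard : ℚ))
    (hXnb : ∀ x ∈ X, ∀ v : V, G.Adj x v → v ∈ C ∪ S)
    (hsame : ∀ x₁ ∈ X, ∀ x₂ ∈ X, ∀ s ∈ S,
      ((G.Adj x₁ s ∧ sign s(x₁, s) = true) ↔ (G.Adj x₂ s ∧ sign s(x₂, s) = true)) ∧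
      ((G.Adj x₁ s ∧ sign s(x₁, s) = false) ↔ (G.Adj x₂ s ∧ sign s(x₂, s) = false))) :
    ∀ x₁ ∈ X, ∀ x₂ ∈ X, x₁ ≠ x₂ →
      ∃ A : Set V, balCount G sign A = beta G sign ∧ x₁ ∈ A ∧ x₂ ∉ A := by
  classical
  intro x₁ hx₁X x₂ hx₂X hne
  -- twin property
  have twin : ∀ x ∈ X, ∀ x' ∈ X, ∀ v : V, v ≠ x' → G.Adj x v →
      G.Adj x' v ∧ sign s(x', v) = sign s(x, v) := by
    intro x hx x' hx' v hvx' hadj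
    rcases hXnb x hx v hadj with hvC | hvS
    · have hadj' : G.Adj x' v := hclique (hXC hx') hvC (Ne.symm hvx')
      refine ⟨hadj', ?_⟩
      rw [hneg x' (hXC hx') v hvC (Ne.symm hvx'), hneg x (hXC hx) v hvC hadj.ne]
    · rcases Bool.eq_false_or_eq_true (sign s(x, v)) with hsg | hsg
      · obtain ⟨ha, hb⟩ := ((hsame x hx x' hx' v hvS).1).mp ⟨hadj, hsg⟩
        exact ⟨ha, by rw [hb, hsg]⟩
      · obtain ⟨ha, hb⟩ := ((hsame x hx x' hx' v hvS).2).mp ⟨hadj, hsg⟩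
        exact ⟨ha, by rw [hb, hsg]⟩
  -- the natural number size inequality
  have hXpos : 0 < X.ncard := Set.ncard_pos (Set.toFinite X) |>.mpr ⟨x₁, hx₁X⟩
  have hsize : C.ncard + (nbhd G X ∩ S).ncard < 2 * X.ncard := by
    have h2 : ((C.ncard : ℚ) + ((nbhd G X ∩ S).ncard : ℚ)) < (X.ncard : ℚ) * 2 := by
      rw [← div_lt_iff₀ (by norm_num : (0:ℚ) < 2)]
      exact hXsize
    have := h2
    rw [mul_comm] at this
    exact_mod_cast this
  have hXleC : X.ncard ≤ C.ncard := Set.ncard_le_ncard hXC (Set.toFinite C)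
  -- main sub-claim
  have main : ∀ A : Set V, balCount G sign A = beta G sign → x₁ ∈ A →
      ∃ A' : Set V, balCount G sign A' = beta G sign ∧ x₁ ∈ A' ∧ x₂ ∉ A' := by
    intro A hA hx₁A
    by_cases hx₂A : x₂ ∈ A
    swap
    · exact ⟨A, hA, hx₁A, hx₂A⟩
    by_cases hXA : ∀ x ∈ X, x ∈ A
    · -- flip x₂ to the other side
      refine ⟨A \ {x₂}, ?_, ⟨hx₁A, hne⟩, by simp⟩
      have hle : balCount G sign A ≤ balCount G sign (A \ {x₂}) := by
        apply flip_le G sign A x₂ hx₂A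
        -- cardinality estimate
        have hsub1 : X \ {x₂} ⊆ {v | G.Adj x₂ v ∧ (sign s(x₂, v) = true ↔ v ∉ A)} := by
          rintro x ⟨hxX, hx2⟩
          have hx2' : x₂ ≠ x := fun h => hx2 (by simp [h.symm])
          refine ⟨hclique (hXC hx₂X) (hXC hxX) hx2', ?_⟩
          rw [hneg x₂ (hXC hx₂X) x (hXC hxX) hx2']
          simp [hXA x hxX]
        have hsub2 : {v | G.Adj x₂ v ∧ (sign s(x₂, v) = true ↔ v ∈ A)}
            ⊆ (C \ X) ∪ (nbhd G X ∩ S) := by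
          rintro v ⟨hadj, hiff⟩
          rcases hXnb x₂ hx₂X v hadj with hvC | hvS
          · left
            refine ⟨hvC, fun hvX => ?_⟩
            have : sign s(x₂, v) = false := hneg x₂ (hXC hx₂X) v hvC hadj.ne
            rw [this] at hiff
            exact absurd (hiff.mpr (hXA v hvX)) (by simp)
          · right
            exact ⟨⟨fun hvX => Set.disjoint_left.mp hCS (hXC hvX) hvS,
              ⟨x₂, hx₂X, hadj⟩⟩, hvS⟩
        calc {v | G.Adj x₂ v ∧ (sign s(x₂, v) = true ↔ v ∈ A)}.ncard
            ≤ ((C \ X) ∪ (nbhd G X ∩ S)).ncard :=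
              Set.ncard_le_ncard hsub2 (Set.toFinite _)
          _ ≤ (C \ X).ncard + (nbhd G X ∩ S).ncard := Set.ncard_union_le _ _
          _ ≤ (X \ {x₂}).ncard := by
              rw [Set.ncard_diff hXC (Set.toFinite X),
                Set.ncard_diff_singleton_of_mem hx₂X]
              omega
          _ ≤ _ := Set.ncard_le_ncard hsub1 (Set.toFinite _)
      exact le_antisymm (balCount_le_beta G sign _) (hA ▸ hle)
    · -- swap x₂ with some x' outside A
      push_neg at hXA
      obtain ⟨x', hx'X, hx'A⟩ := hXA
      have h2' : x₂ ≠ x' := fun h => hx'A (h ▸ hx₂A)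
      have h1' : x₁ ≠ x' := fun h => hx'A (h ▸ hx₁A)
      set σ : Equiv.Perm V := Equiv.swap x₂ x' with hσ
      have hinv : ∀ v, σ (σ v) = v := fun v => Equiv.swap_apply_self x₂ x' v
      have helper : ∀ u v : V, G.Adj u v → v ≠ x₂ → v ≠ x' →
          G.Adj (σ u) v ∧ sign s(σ u, v) = sign s(u, v) := by
        intro u v huv hv2 hv'
        by_cases hu2 : u = x₂
        · have h := twin x₂ hx₂X x' hx'X v hv' (hu2 ▸ huv)
          rw [hu2, hσ, Equiv.swap_apply_left]
          exact h
        by_cases hu' : u = x'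
        · have h := twin x' hx'X x₂ hx₂X v hv2 (hu' ▸ huv)
          rw [hu', hσ, Equiv.swap_apply_right]
          exact h
        · rw [hσ, Equiv.swap_apply_of_ne_of_ne hu2 hu']
          exact ⟨huv, rfl⟩
      have key : ∀ u v, G.Adj u v → G.Adj (σ u) (σ v) ∧ sign s(σ u, σ v) = sign s(u, v) := by
        intro u v huv
        by_cases hv2 : v = x₂
        · by_cases hu' : u = x'
          · have hadj : G.Adj x' x₂ := hu' ▸ hv2 ▸ huv
            rw [hu', hv2, hσ, Equiv.swap_apply_right, Equiv.swap_apply_left]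
            exact ⟨hadj.symm, by rw [Sym2.eq_swap]⟩
          · have hu2 : u ≠ x₂ := fun h => huv.ne (h.trans hv2.symm)
            obtain ⟨ha, hb⟩ := helper x₂ u (hv2 ▸ huv.symm) hu2 hu'
            rw [hσ, Equiv.swap_apply_left] at ha hb
            rw [hv2, hσ, Equiv.swap_apply_of_ne_of_ne hu2 hu', Equiv.swap_apply_left]
            exact ⟨ha.symm, by rw [Sym2.eq_swap, hb, Sym2.eq_swap]⟩
        by_cases hv' : v = x'
        · by_cases hu2 : u = x₂
          · have hadj : G.Adj x₂ x' := hu2 ▸ hv' ▸ huv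
            rw [hu2, hv', hσ, Equiv.swap_apply_left, Equiv.swap_apply_right]
            exact ⟨hadj.symm, by rw [Sym2.eq_swap]⟩
          · have hu'' : u ≠ x' := fun h => huv.ne (h.trans hv'.symm)
            obtain ⟨ha, hb⟩ := helper x' u (hv' ▸ huv.symm) hu2 hu''
            rw [hσ, Equiv.swap_apply_right] at ha hb
            rw [hv', hσ, Equiv.swap_apply_of_ne_of_ne hu2 hu'', Equiv.swap_apply_right]
            exact ⟨ha.symm, by rw [Sym2.eq_swap, hb, Sym2.eq_swap]⟩
        · have h := helper u v huv hv2 hv'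
          rw [hσ, Equiv.swap_apply_of_ne_of_ne hv2 hv']
          exact h
      refine ⟨σ ⁻¹' A, ?_, ?_, ?_⟩
      · rw [balCount_perm G sign σ hinv key A]
        exact hA
      · simp only [Set.mem_preimage]
        rw [hσ, Equiv.swap_apply_of_ne_of_ne hne h1']
        exact hx₁A
      · simp only [Set.mem_preimage]
        rw [hσ, Equiv.swap_apply_left]
        exact hx'A
  obtain ⟨A, hA⟩ := exists_opt G sign
  by_cases h : x₁ ∈ A
  · exact main A hA h
  · exact main Aᶜ (by rw [balCount_compl]; exact hA) h
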